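/- For every pair of adjacent vertices i, j of a finite connected simple graph in which every vertex has degree at least 1, the Ollivier–Ricci curvature satisfies κ(i,j) ≤ #(i,j)/max(d_i, d_j), where #(i,j) is the number of common neighbors of i and j (equivalently, the number of triangles of G containing the edge {i,j}). -/
import Mathlib


open Finset

/-- The probability measure at node `i`: uniform on the neighbors of `i`. -/
noncomputable def massDist {V : Type*} [Fintype V] (G : SimpleGraph V)
    [DecidableRel G.Adj] (i u : V) : ℝ :=
  if G.Adj i u then 1 / (G.degree i : ℝ) else 0

/-- `Γ` is a coupling of the measures `massDist G i` and `massDist G j`. -/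
def IsCoupling {V : Type*} [Fintype V] (G : SimpleGraph V) [DecidableRel G.Adj]
    (i j : V) (Γ : V → V → ℝ) : Prop :=
  (∀ u v, 0 ≤ Γ u v) ∧
  (∀ u, ∑ v, Γ u v = massDist G i u) ∧
  (∀ v, ∑ u, Γ u v = massDist G j v)

/-- The L¹-Wasserstein distance between the neighborhood measures of `i` and `j`,
with respect to the shortest-path distance. -/
noncomputable def wassersteinW1 {V : Type*} [Fintype V] (G : SimpleGraph V)
    [DecidableRel G.Adj] (i j : V) : ℝ :=
  sInf { c : ℝ | ∃ Γ : V → V → ℝ, IsCoupling G i j Γ ∧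
    c = ∑ u, ∑ v, Γ u v * (G.dist u v : ℝ) }

/-- The Ollivier–Ricci curvature of the edge `{i, j}` (for adjacent `i`, `j`,
so that `d(i,j) = 1`). -/
noncomputable def ollivierRicci {V : Type*} [Fintype V] (G : SimpleGraph V)
    [DecidableRel G.Adj] (i j : V) : ℝ :=
  1 - wassersteinW1 G i j

lemma massDist_nonneg {V : Type*} [Fintype V] (G : SimpleGraph V)
    [DecidableRel G.Adj] (i u : V) : 0 ≤ massDist G i u := by
  unfold massDist; split <;> positivity

lemma sum_massDist {V : Type*} [Fintype V] (G : SimpleGraph V)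
    [DecidableRel G.Adj] (i : V) (hd : 1 ≤ G.degree i) :
    ∑ u, massDist G i u = 1 := by
  have hne : (G.degree i : ℝ) ≠ 0 := by positivity
  simp only [massDist, Finset.sum_ite, Finset.sum_const_zero, add_zero, Finset.sum_const,
    nsmul_eq_mul]
  have : Finset.filter (fun u => G.Adj i u) Finset.univ = G.neighborFinset i := by
    ext u; simp
  rw [this, SimpleGraph.card_neighborFinset_eq_degree]
  field_simp

theorem ollivierRicci_le_triangles_div_max_degree
    {V : Type*} [Fintype V] [DecidableEq V] (G : SimpleGraph V) [DecidableRel G.Adj]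
    (hconn : G.Connected) (hdeg : ∀ v : V, 1 ≤ G.degree v)
    (i j : V) (hij : G.Adj i j) :
    ollivierRicci G i j ≤
      ((G.neighborFinset i ∩ G.neighborFinset j).card : ℝ) /
        (max (G.degree i) (G.degree j) : ℝ) := by
  have hdi : (0:ℝ) < G.degree i := by exact_mod_cast hdeg i
  have hdj : (0:ℝ) < G.degree j := by exact_mod_cast hdeg j
  have hmax : (0:ℝ) < (max (G.degree i) (G.degree j) : ℕ) := by
    exact_mod_cast lt_of_lt_of_le (hdeg i) (le_max_left _ _)
  set T : ℝ := ((G.neighborFinset i ∩ G.neighborFinset j).card : ℝ) /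
      (max (G.degree i) (G.degree j) : ℝ) with hT
  -- lower bound for every element of the set
  have hlb : ∀ c ∈ { c : ℝ | ∃ Γ : V → V → ℝ, IsCoupling G i j Γ ∧
      c = ∑ u, ∑ v, Γ u v * (G.dist u v : ℝ) }, 1 - T ≤ c := by
    rintro c ⟨Γ, ⟨hpos, hrow, hcol⟩, rfl⟩
    have hdiag : ∀ u : V, Γ u u ≤ if G.Adj i u ∧ G.Adj j u then
        (1 / (max (G.degree i) (G.degree j) : ℝ)) else 0 := by
      intro u
      by_cases h1 : G.Adj i u
      · by_cases h2 : G.Adj j u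
        · simp only [h1, h2, and_self, if_true]
          have hle1 : Γ u u ≤ massDist G i u := by
            rw [← hrow u]
            exact Finset.single_le_sum (fun v _ => hpos u v) (Finset.mem_univ u)
          have hle2 : Γ u u ≤ massDist G j u := by
            rw [← hcol u]
            exact Finset.single_le_sum (fun v _ => hpos v u) (Finset.mem_univ u)
          rcases le_total (G.degree i) (G.degree j) with h | h
          · rw [max_eq_right (by exact_mod_cast h : (G.degree i:ℝ) ≤ (G.degree j:ℝ))]
            calc Γ u u ≤ massDist G j u := hle2
            _ = 1 / (G.degree j : ℝ) := by simp [massDist, h2]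
          · rw [max_eq_left (by exact_mod_cast h : (G.degree j:ℝ) ≤ (G.degree i:ℝ))]
            calc Γ u u ≤ massDist G i u := hle1
            _ = 1 / (G.degree i : ℝ) := by simp [massDist, h1]
        · simp only [h2, and_false, if_false]
          have := hcol u
          have hle2 : Γ u u ≤ massDist G j u := by
            rw [← hcol u]
            exact Finset.single_le_sum (fun v _ => hpos v u) (Finset.mem_univ u)
          simpa [massDist, h2] using hle2
      · simp only [h1, false_and, if_false]
        have hle1 : Γ u u ≤ massDist G i u := by
          rw [← hrow u]
          exact Finset.single_le_sum (fun v _ => hpos u v) (Finset.mem_univ u)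
        simpa [massDist, h1] using hle1
    have hsumdiag : ∑ u, Γ u u ≤ T := by
      calc ∑ u, Γ u u ≤ ∑ u, (if G.Adj i u ∧ G.Adj j u then
          (1 / (max (G.degree i) (G.degree j) : ℝ)) else 0) :=
        Finset.sum_le_sum fun u _ => hdiag u
      _ = ((Finset.filter (fun u => G.Adj i u ∧ G.Adj j u) Finset.univ).card : ℝ)
            * (1 / (max (G.degree i) (G.degree j) : ℝ)) := by
          rw [Finset.sum_ite, Finset.sum_const_zero, add_zero, Finset.sum_const, nsmul_eq_mul]
      _ = T := by
          have : Finset.filter (fun u => G.Adj i u ∧ G.Adj j u) Finset.univ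
              = G.neighborFinset i ∩ G.neighborFinset j := by
            ext u; simp [Finset.mem_inter]
          rw [this, hT]
          push_cast
          ring
    have htotal : ∑ u, ∑ v, Γ u v = 1 := by
      simp only [hrow]
      exact sum_massDist G i (hdeg i)
    have hstep : ∑ u, ∑ v, Γ u v * (if u = v then (0:ℝ) else 1) ≤
        ∑ u, ∑ v, Γ u v * (G.dist u v : ℝ) := by
      refine Finset.sum_le_sum fun u _ => Finset.sum_le_sum fun v _ => ?_
      by_cases h : u = v
      · simp [h, SimpleGraph.dist_self, hpos]
      · simp only [h, if_false, mul_one]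
        have h1 : 1 ≤ G.dist u v := hconn.pos_dist_of_ne h
        have : (1:ℝ) ≤ (G.dist u v : ℝ) := by exact_mod_cast h1
        nlinarith [hpos u v]
    have hval : ∑ u, ∑ v, Γ u v * (if u = v then (0:ℝ) else 1)
        = 1 - ∑ u, Γ u u := by
      have : ∀ u, ∑ v, Γ u v * (if u = v then (0:ℝ) else 1)
          = (∑ v, Γ u v) - Γ u u := by
        intro u
        have : ∑ v, Γ u v * (if u = v then (0:ℝ) else 1)
            = ∑ v, (Γ u v - if u = v then Γ u v else 0) := by
          apply Finset.sum_congr rfl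
          intro v _
          by_cases h : u = v <;> simp [h]
        rw [this, Finset.sum_sub_distrib, Finset.sum_ite_eq, if_pos (Finset.mem_univ u)]
      simp only [this, Finset.sum_sub_distrib]
      rw [htotal]
    linarith [hstep, hval ▸ (by linarith [hsumdiag] : 1 - T ≤ 1 - ∑ u, Γ u u)]
  -- nonempty
  have hne : { c : ℝ | ∃ Γ : V → V → ℝ, IsCoupling G i j Γ ∧
      c = ∑ u, ∑ v, Γ u v * (G.dist u v : ℝ) }.Nonempty := by
    refine ⟨_, fun u v => massDist G i u * massDist G j v, ⟨?_, ?_, ?_⟩, rfl⟩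
    · intro u v; exact mul_nonneg (massDist_nonneg G i u) (massDist_nonneg G j v)
    · intro u; rw [← Finset.mul_sum, sum_massDist G j (hdeg j), mul_one]
    · intro v; rw [← Finset.sum_mul, sum_massDist G i (hdeg i), one_mul]
  have : 1 - T ≤ wassersteinW1 G i j := le_csInf hne hlb
  unfold ollivierRicci
  linarith
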